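/- Let G be a group with a surjective monoid homomorphism σ : Σ* → G from a free monoid over a finite alphabet such that σ⁻¹(1) is context-free, and let H be a finitely generated subgroup of G with a surjective monoid homomorphism μ : Δ* → H from a free monoid over a finite alphabet. Then μ⁻¹(1) is context-free. -/

import Mathlib

namespace WPCF
open ContextFreeGrammar

variable {T : Type} {g : ContextFreeGrammar T}

/-- Counted derivations. -/
inductive DerivesIn (g : ContextFreeGrammar T) :
    List (Symbol T g.NT) → List (Symbol T g.NT) → ℕ → Prop
  | refl (s) : DerivesIn g s s 0
  | head {u v w n} : g.Produces u v → DerivesIn g v w n → DerivesIn g u w (n + 1)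

lemma DerivesIn.tail {u v w : List (Symbol T g.NT)} {n : ℕ}
    (h : DerivesIn g u v n) (hp : g.Produces v w) : DerivesIn g u w (n + 1) := by
  induction h with
  | refl s => exact .head hp (.refl _)
  | head h1 _ ih => exact .head h1 (ih hp)

lemma derives_iff_derivesIn {u v : List (Symbol T g.NT)} :
    g.Derives u v ↔ ∃ n, DerivesIn g u v n := by
  constructor
  · intro h
    induction h with
    | refl => exact ⟨0, .refl _⟩
    | tail _ hp ih => exact ⟨ih.choose + 1, ih.choose_spec.tail hp⟩
  · rintro ⟨n, h⟩
    induction h with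
    | refl s => rfl
    | head hp _ ih => exact hp.trans_derives ih

lemma no_rewrite_terminals {r : ContextFreeRule T g.NT} {t : List T} {v : List (Symbol T g.NT)}
    (h : r.Rewrites (t.map Symbol.terminal) v) : False := by
  obtain ⟨p, q, hpq, -⟩ := h.exists_parts
  have : Symbol.nonterminal r.input ∈ t.map Symbol.terminal := by
    rw [hpq]; simp
  simp at this

/-- A rewrite of `s₁ ++ s₂` happens in `s₁` or in `s₂`. -/
lemma rewrites_append {r : ContextFreeRule T g.NT} {s₁ s₂ v : List (Symbol T g.NT)}
    (h : r.Rewrites (s₁ ++ s₂) v) :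
    (∃ t, r.Rewrites s₁ t ∧ v = t ++ s₂) ∨ (∃ t, r.Rewrites s₂ t ∧ v = s₁ ++ t) := by
  obtain ⟨p, q, hu, hv⟩ := h.exists_parts
  rw [List.append_assoc] at hu
  rcases List.append_eq_append_iff.mp hu with ⟨a', ha1, ha2⟩ | ⟨c', hc1, hc2⟩
  ·
    -- hu : s₁ ++ s₂ = p ++ ([nt] ++ q);  case: p = s₁ ++ a' ∧ s₂ = a' ++ ([nt] ++ q)
    refine Or.inr ⟨a' ++ r.output ++ q, ?_, ?_⟩
    · rw [ha2]; rw [← List.append_assoc]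
      exact r.rewrites_of_exists_parts a' q
    · rw [hv, ha1]; simp
  · -- s₁ = p ++ c' ∧ [nt] ++ q = c' ++ s₂
    cases c' with
    | nil =>
      simp at hc1 hc2
      refine Or.inr ⟨r.output ++ q, ?_, ?_⟩
      · rw [← hc2]
        simpa using r.rewrites_of_exists_parts [] q
      · rw [hv, hc1]; simp
    | cons x c'' =>
      have hc2' : Symbol.nonterminal r.input = x ∧ q = c'' ++ s₂ := by
        have := hc2
        simp only [List.singleton_append, List.cons_append, List.cons.injEq] at this
        exact this
      refine Or.inl ⟨p ++ r.output ++ c'', ?_, ?_⟩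
      · rw [hc1, ← hc2'.1]
        have := r.rewrites_of_exists_parts p c''
        simpa using this
      · rw [hv, hc2'.2]; simp
lemma DerivesIn.zero_inv {u v : List (Symbol T g.NT)} (h : DerivesIn g u v 0) : u = v := by
  generalize hn : 0 = n at h
  cases h with
  | refl => rfl
  | head => omega

lemma DerivesIn.succ_inv {u v : List (Symbol T g.NT)} {m : ℕ} (h : DerivesIn g u v (m + 1)) :
    ∃ w, g.Produces u w ∧ DerivesIn g w v m := by
  generalize hn : m + 1 = n at h
  cases h with
  | refl => omega
  | head hp hrest =>
    rename_i n'
    have hm : n' = m := by omega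
    subst hm
    exact ⟨_, hp, hrest⟩

lemma DerivesIn.append_split {s₁ s₂ : List (Symbol T g.NT)} {z : List T} {n : ℕ}
    (h : DerivesIn g (s₁ ++ s₂) (z.map Symbol.terminal) n) :
    ∃ z₁ z₂ n₁ n₂, z = z₁ ++ z₂ ∧ n = n₁ + n₂ ∧
      DerivesIn g s₁ (z₁.map Symbol.terminal) n₁ ∧
      DerivesIn g s₂ (z₂.map Symbol.terminal) n₂ := by
  induction n generalizing s₁ s₂ with
  | zero =>
    have hs := h.zero_inv
    refine ⟨z.take s₁.length, z.drop s₁.length, 0, 0, (z.take_append_drop _).symm, rfl, ?_, ?_⟩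
    · have h1 : s₁ = (z.take s₁.length).map Symbol.terminal := by
        have := congrArg (List.take s₁.length) hs
        simpa [List.take_append] using this
      exact h1 ▸ .refl _
    · have h2 : s₂ = (z.drop s₁.length).map Symbol.terminal := by
        have := congrArg (List.drop s₁.length) hs
        simpa [List.drop_append] using this
      exact h2 ▸ .refl _
  | succ m ih =>
    obtain ⟨w, hp, hrest⟩ := h.succ_inv
    obtain ⟨r, hr, hrw⟩ := hp
    rcases rewrites_append hrw with ⟨t, ht, rfl⟩ | ⟨t, ht, rfl⟩
    · obtain ⟨z₁, z₂, n₁, n₂, hz, hn, d1, d2⟩ := ih hrest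
      exact ⟨z₁, z₂, n₁ + 1, n₂, hz, by omega, .head ⟨r, hr, ht⟩ d1, d2⟩
    · obtain ⟨z₁, z₂, n₁, n₂, hz, hn, d1, d2⟩ := ih hrest
      exact ⟨z₁, z₂, n₁, n₂ + 1, hz, by omega, d1, .head ⟨r, hr, ht⟩ d2⟩

lemma DerivesIn.nt_head {A : g.NT} {z : List T} {n : ℕ}
    (h : DerivesIn g [Symbol.nonterminal A] (z.map Symbol.terminal) n) :
    ∃ r ∈ g.rules, r.input = A ∧ ∃ m, n = m + 1 ∧
      DerivesIn g r.output (z.map Symbol.terminal) m := by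
  cases n with
  | zero =>
    exfalso
    have hs := h.zero_inv
    have : Symbol.nonterminal A ∈ z.map Symbol.terminal := by rw [← hs]; simp
    simp at this
  | succ m =>
    obtain ⟨w, hp, hrest⟩ := h.succ_inv
    obtain ⟨r, hr, hrw⟩ := hp
    obtain ⟨p, q, hu, hv⟩ := hrw.exists_parts
    have hp0 : p = [] ∧ q = [] := by
      cases p with
      | nil => simpa using congrArg List.length hu
      | cons a l =>
        exfalso
        have := congrArg List.length hu
        simp at this
    obtain ⟨rfl, rfl⟩ := hp0
    simp at hu hv
    exact ⟨r, hr, hu.symm, m, rfl, hv ▸ hrest⟩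

lemma DerivesIn.terminal_src {t : List T} {v : List (Symbol T g.NT)} {n : ℕ}
    (h : DerivesIn g (t.map Symbol.terminal) v n) : v = t.map Symbol.terminal ∧ n = 0 := by
  cases n with
  | zero => exact ⟨h.zero_inv.symm, rfl⟩
  | succ m =>
    obtain ⟨w, hp, -⟩ := h.succ_inv
    exact absurd hp.choose_spec.2 (fun hh => no_rewrite_terminals hh)

lemma DerivesIn.terminal_head {a : T} {z : List T} {n : ℕ}
    (h : DerivesIn g [Symbol.terminal a] (z.map Symbol.terminal) n) : z = [a] := by
  have h' : DerivesIn g (([a] : List T).map Symbol.terminal) (z.map Symbol.terminal) n := h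
  obtain ⟨h1, -⟩ := h'.terminal_src
  have := congrArg (List.map (fun s => match s with | Symbol.terminal t => t | _ => a)) h1
  simp only [List.map_map] at this
  simpa [Function.comp_def] using this



set_option linter.unusedSectionVars false

section Construction

variable {α Δ : Type} [Fintype α] [Fintype Δ]

/-- Apply a letter-to-word map to a word. -/
def appH (f : Δ → List α) (w : List Δ) : List α := w.flatMap f

variable {f : Δ → List α}

@[simp] lemma appH_nil : appH f [] = [] := rfl
@[simp] lemma appH_cons {δ : Δ} {w : List Δ} : appH f (δ :: w) = f δ ++ appH f w := rfl
@[simp] lemma appH_append {w₁ w₂ : List Δ} :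
    appH f (w₁ ++ w₂) = appH f w₁ ++ appH f w₂ := List.flatMap_append ..

/-- Nonterminals of the new grammar: triples, plus `E` (= `Sum.inr false`) and the new
initial symbol (= `Sum.inr true`). -/
abbrev NT2 (α N : Type) : Type := Sum (List α × Symbol α N × List α) Bool

variable {N : Type}

/-- Triple nonterminal as a symbol. -/
def tr (Δ : Type) (x : List α) (X : Symbol α N) (y : List α) : Symbol Δ (NT2 α N) :=
  Symbol.nonterminal (Sum.inl (x, X, y))

/-- The `E` nonterminal as a symbol. -/
def Esym (α Δ N : Type) : Symbol Δ (NT2 α N) := Symbol.nonterminal (Sum.inr false)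

/-- Convert a rule output, given a chain of buffers (length = #symbols + 1). -/
def mkOut (Δ : Type) : List (Symbol α N) → List (List α) → List (Symbol Δ (NT2 α N))
  | [], _ => []
  | X :: s, b₁ :: b₂ :: c => tr Δ b₁ X b₂ :: mkOut Δ s (b₂ :: c)
  | _ :: _, _ => []

/-- All prefixes of all blocks. -/
noncomputable def Prefs (f : Δ → List α) : Finset (List α) := by
  classical
  exact insert [] ((Finset.univ : Finset Δ).biUnion fun δ =>
    (Finset.range ((f δ).length + 1)).image fun i => (f δ).take i)

lemma nil_mem_Prefs (f : Δ → List α) : [] ∈ Prefs f := by simp [Prefs]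

lemma take_block_mem_Prefs (f : Δ → List α) (δ : Δ) (i : ℕ) : (f δ).take i ∈ Prefs f := by
  classical
  rcases le_or_gt i ((f δ).length) with hi | hi
  · simp only [Prefs, Finset.mem_insert, Finset.mem_biUnion, Finset.mem_image, Finset.mem_range]
    exact Or.inr ⟨δ, Finset.mem_univ _, i, by omega, rfl⟩
  · rw [List.take_of_length_le (by omega)]
    simp only [Prefs, Finset.mem_insert, Finset.mem_biUnion, Finset.mem_image, Finset.mem_range]
    exact Or.inr ⟨δ, Finset.mem_univ _, (f δ).length, by omega, by simp⟩

lemma take_mem_Prefs {b : List α} (hb : b ∈ Prefs f) (m : ℕ) : b.take m ∈ Prefs f := by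
  classical
  simp only [Prefs, Finset.mem_insert, Finset.mem_biUnion, Finset.mem_image,
    Finset.mem_range] at hb
  rcases hb with rfl | ⟨δ, -, i, hi, rfl⟩
  · simpa using nil_mem_Prefs f
  · rw [List.take_take]
    exact take_block_mem_Prefs f δ _

/-- Chains of buffers of a given length over a given finset. -/
noncomputable def chainsF (P : Finset (List α)) : ℕ → Finset (List (List α))
  | 0 => {[]}
  | n + 1 => by
      classical
      exact P.biUnion fun b => (chainsF P n).image (b :: ·)

lemma mem_chainsF {P : Finset (List α)} :
    ∀ {n : ℕ} {c : List (List α)}, c ∈ chainsF P n ↔ (c.length = n ∧ ∀ b ∈ c, b ∈ P) := by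
  intro n
  induction n with
  | zero =>
    intro c
    constructor
    · intro hc
      simp only [chainsF, Finset.mem_singleton] at hc
      subst hc
      simp
    · rintro ⟨h1, -⟩
      have : c = [] := by cases c <;> simp_all
      simp [this, chainsF]
  | succ m ih =>
    intro c
    classical
    simp only [chainsF, Finset.mem_biUnion, Finset.mem_image]
    constructor
    · rintro ⟨b, hb, c', hc', rfl⟩
      obtain ⟨h1, h2⟩ := ih.mp hc'
      refine ⟨by simp [h1], ?_⟩
      intro x hx
      rcases List.mem_cons.mp hx with rfl | hx
      · exact hb
      · exact h2 x hx
    · rintro ⟨h1, h2⟩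
      cases c with
      | nil => simp at h1
      | cons b c' =>
        refine ⟨b, h2 b (by simp), c', ih.mpr ⟨by simpa using h1, fun x hx => h2 x (by simp [hx])⟩, rfl⟩

/-- Lists over `Δ` of length at most `n`. -/
noncomputable def listsLe (Δ : Type) [Fintype Δ] : ℕ → Finset (List Δ)
  | 0 => {[]}
  | n + 1 => by
      classical
      exact insert [] ((Finset.univ : Finset Δ).biUnion fun δ => (listsLe Δ n).image (δ :: ·))

lemma mem_listsLe {n : ℕ} {w : List Δ} (hw : w.length ≤ n) : w ∈ listsLe Δ n := by
  induction n generalizing w with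
  | zero =>
    have : w = [] := by cases w <;> simp_all
    simp [this, listsLe]
  | succ m ih =>
    classical
    cases w with
    | nil => simp [listsLe]
    | cons δ w' =>
      simp only [listsLe, Finset.mem_insert, Finset.mem_biUnion, Finset.mem_image]
      exact Or.inr ⟨δ, Finset.mem_univ _, w', ih (by simpa using hw), rfl⟩

variable (g : ContextFreeGrammar α) [Fintype α]

/-- Rules of the new grammar. -/
noncomputable def rules2 (g : ContextFreeGrammar α) (f : Δ → List α) :
    Finset (ContextFreeRule Δ (NT2 α g.NT)) := by
  classical
  exact
    ({⟨Sum.inr true, [Esym α Δ g.NT, tr Δ [] (Symbol.nonterminal g.initial) []]⟩,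
      ⟨Sum.inr false, []⟩} : Finset (ContextFreeRule Δ (NT2 α g.NT)))
    ∪ ((Finset.univ : Finset Δ).filter fun δ => f δ = []).image
        (fun δ => ⟨Sum.inr false, [Symbol.terminal δ, Esym α Δ g.NT]⟩)
    ∪ g.rules.biUnion (fun r => (chainsF (Prefs f) (r.output.length + 1)).image fun c =>
        ⟨Sum.inl (c.headD [], Symbol.nonterminal r.input, c.getLastD []), mkOut Δ r.output c⟩)
    ∪ (((Prefs f) ×ˢ ((Finset.univ : Finset α) ×ˢ (Prefs f))).biUnion fun p =>
        ((listsLe Δ (p.1.length + 1)).filter fun ds =>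
            (∀ δ ∈ ds, f δ ≠ []) ∧ p.1 ++ [p.2.1] = appH f ds ++ p.2.2).image fun ds =>
          ⟨Sum.inl (p.1, Symbol.terminal p.2.1, p.2.2),
            ds.flatMap fun δ => [Symbol.terminal δ, Esym α Δ g.NT]⟩)

/-- The new grammar. -/
noncomputable def G2 (g : ContextFreeGrammar α) (f : Δ → List α) : ContextFreeGrammar Δ :=
  ⟨NT2 α g.NT, Sum.inr true, rules2 g f⟩

end Construction

section Soundness

variable {α Δ : Type} [Fintype α] [Fintype Δ] {g : ContextFreeGrammar α} {f : Δ → List α}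

open ContextFreeGrammar

/-- Meaning of an original-grammar symbol. -/
def SVal (g : ContextFreeGrammar α) : Symbol α g.NT → List α → Prop
  | .terminal a, z => z = [a]
  | .nonterminal A, z => g.Derives [Symbol.nonterminal A] (z.map Symbol.terminal)

/-- Meaning of a new-grammar symbol. -/
def Sem (g : ContextFreeGrammar α) (f : Δ → List α) : Symbol Δ (NT2 α g.NT) → Language Δ
  | .terminal δ => {[δ]}
  | .nonterminal (.inr true) => {w | appH f w ∈ g.language}
  | .nonterminal (.inr false) => {w | appH f w = []}
  | .nonterminal (.inl (x, X, y)) => {w | ∃ z, SVal g X z ∧ x ++ z = appH f w ++ y}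

/-- Meaning of a new-grammar string. -/
def SemL (g : ContextFreeGrammar α) (f : Δ → List α) (s : List (Symbol Δ (NT2 α g.NT))) :
    Language Δ := (s.map (Sem g f)).prod

lemma SemL_nil : SemL g f [] = 1 := rfl

lemma SemL_cons {X s} : SemL g f (X :: s) = Sem g f X * SemL g f s := by
  simp [SemL]

lemma SemL_append {u v} : SemL g f (u ++ v) = SemL g f u * SemL g f v := by
  simp [SemL]

lemma SemL_singleton {X} : SemL g f [X] = Sem g f X := by
  simp [SemL]

lemma self_mem_SemL {w : List Δ} : w ∈ SemL g f (w.map Symbol.terminal) := by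
  induction w with
  | nil => simp [SemL, Language.mem_one]
  | cons δ w ih =>
    rw [List.map_cons, SemL_cons, Language.mem_mul]
    exact ⟨[δ], rfl, w, ih, rfl⟩

lemma getLastD_ne_nil {l : List (List α)} (hl : l ≠ []) (d d' : List α) :
    l.getLastD d = l.getLastD d' := by
  cases l with
  | nil => simp at hl
  | cons a l => rw [List.getLastD_cons, List.getLastD_cons]

lemma semL_mkOut : ∀ (s : List (Symbol α g.NT)) (c : List (List α)),
    c.length = s.length + 1 → ∀ w ∈ SemL g f (mkOut Δ s c),
    ∃ z, g.Derives s (z.map Symbol.terminal) ∧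
      c.headD [] ++ z = appH f w ++ c.getLastD [] := by
  intro s
  induction s with
  | nil =>
    intro c hc w hw
    obtain ⟨b, rfl⟩ : ∃ b, c = [b] := by
      cases c with
      | nil => simp at hc
      | cons b c' => cases c' with
        | nil => exact ⟨b, rfl⟩
        | cons _ _ => simp at hc
    have hw' : w = [] := by simpa [mkOut, SemL, Language.mem_one] using hw
    exact ⟨[], by subst hw'; rfl, by simp [hw']⟩
  | cons X s' ih =>
    intro c hc w hw
    obtain ⟨b₁, b₂, c', rfl⟩ : ∃ b₁ b₂ c', c = b₁ :: b₂ :: c' := by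
      cases c with
      | nil => simp at hc
      | cons b₁ c0 => cases c0 with
        | nil => simp at hc
        | cons b₂ c' => exact ⟨b₁, b₂, c', rfl⟩
    rw [mkOut, SemL_cons, Language.mem_mul] at hw
    obtain ⟨w₁, hw₁, w₂, hw₂, rfl⟩ := hw
    obtain ⟨z₂, hd₂, hch₂⟩ := ih (b₂ :: c') (by simpa using hc) w₂ hw₂
    simp only [List.headD_cons] at hch₂
    obtain ⟨z₁, hv₁, hch₁⟩ := hw₁
    have hd₁ : g.Derives [X] (z₁.map Symbol.terminal) := by
      cases X with
      | terminal a =>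
          rw [show z₁ = [a] from hv₁]
          rfl
      | nonterminal A => exact hv₁
    refine ⟨z₁ ++ z₂, ?_, ?_⟩
    · have h1 := hd₁.append_right s'
      have h2 := hd₂.append_left (z₁.map Symbol.terminal)
      simpa using h1.trans h2
    · have hlast : (b₁ :: b₂ :: c').getLastD ([] : List α) = (b₂ :: c').getLastD [] := by
        rw [List.getLastD_cons]
        exact getLastD_ne_nil (by simp) _ _
    -- chain computation
      have : b₁ ++ (z₁ ++ z₂) = appH f w₁ ++ (b₂ ++ z₂) := by
        rw [← List.append_assoc, hch₁]; simp
      rw [List.headD_cons, hlast, this, hch₂]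
      simp [List.append_assoc]

lemma semL_pattern : ∀ (ds : List Δ) (w : List Δ),
    w ∈ SemL g f (ds.flatMap fun δ => [Symbol.terminal δ, Esym α Δ g.NT]) →
    appH f w = appH f ds := by
  intro ds
  induction ds with
  | nil =>
    intro w hw
    have : w = [] := by simpa [SemL, Language.mem_one] using hw
    simp [this]
  | cons δ ds' ih =>
    intro w hw
    rw [List.flatMap_cons] at hw
    have : [Symbol.terminal δ, Esym α Δ g.NT] ++ (ds'.flatMap fun δ => [Symbol.terminal δ, Esym α Δ g.NT])
        = Symbol.terminal δ :: Esym α Δ g.NT :: (ds'.flatMap fun δ => [Symbol.terminal δ, Esym α Δ g.NT]) := rfl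
    rw [this, SemL_cons, Language.mem_mul] at hw
    obtain ⟨w₁, hw₁, w₂₃, hw₂₃, rfl⟩ := hw
    rw [SemL_cons, Language.mem_mul] at hw₂₃
    obtain ⟨w₂, hw₂, w₃, hw₃, rfl⟩ := hw₂₃
    have hw₁' : w₁ = [δ] := hw₁
    have hw₂' : appH f w₂ = [] := hw₂
    have := ih w₃ hw₃
    simp [hw₁', hw₂', this]

lemma rule_sound : ∀ r' ∈ rules2 g f, SemL g f r'.output ≤ Sem g f (Symbol.nonterminal r'.input) := by
  classical
  intro r' hr'
  simp only [rules2, Finset.mem_union, Finset.mem_insert, Finset.mem_singleton,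
    Finset.mem_image, Finset.mem_biUnion, Finset.mem_filter, Finset.mem_univ, true_and,
    Finset.mem_product] at hr'
  rcases hr' with (((rfl | rfl) | ⟨δ, hδ, rfl⟩) | ⟨r, hr, c, hc, rfl⟩) | ⟨p, hp, ds, hds, rfl⟩
  rotate_right
  · -- terminal rules
    obtain ⟨-, hds1, hds2⟩ := hds
    intro w hw
    have h1 := semL_pattern ds w hw
    exact ⟨[p.2.1], rfl, by rw [hds2, ← h1]⟩
  · -- start rule
    intro w hw
    rw [SemL_cons] at hw
    obtain ⟨w₁, hw₁, w₂, hw₂, rfl⟩ := Language.mem_mul.mp hw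
    rw [SemL_singleton] at hw₂
    obtain ⟨z, hz, hch⟩ := hw₂
    have hz' : appH f w₂ = z := by simpa using hch.symm
    have hw₁' : appH f w₁ = [] := hw₁
    show appH f (w₁ ++ w₂) ∈ g.language
    rw [appH_append, hw₁', hz', List.nil_append]
    exact hz
  · -- E → []
    intro w hw
    have : w = [] := (Language.mem_one _).mp hw
    show appH f w = []
    simp [this]
  · -- E → δ E
    intro w hw
    rw [SemL_cons] at hw
    obtain ⟨w₁, hw₁, w₂, hw₂, rfl⟩ := Language.mem_mul.mp hw
    rw [SemL_singleton] at hw₂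
    have hw₁' : w₁ = [δ] := hw₁
    have hw₂' : appH f w₂ = [] := hw₂
    show appH f (w₁ ++ w₂) = []
    simp [hw₁', hw₂', hδ]
  · -- main rules
    intro w hw
    obtain ⟨z, hd, hch⟩ := semL_mkOut r.output c (mem_chainsF.mp hc).1 w hw
    refine ⟨z, ?_, hch⟩
    have : g.Produces [Symbol.nonterminal r.input] r.output :=
      ⟨r, hr, ContextFreeRule.Rewrites.input_output⟩
    exact this.trans_derives hd

lemma semL_step {u v : List (Symbol Δ (NT2 α g.NT))} (h : (G2 g f).Produces u v) :
    SemL g f v ≤ SemL g f u := by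
  obtain ⟨r, hr, hrw⟩ := h
  obtain ⟨p, q, rfl, rfl⟩ := hrw.exists_parts
  have key : ∀ a b c : List (Symbol Δ (NT2 α g.NT)),
      SemL g f (a ++ b ++ c) = SemL g f a * SemL g f b * SemL g f c := fun a b c => by
    rw [SemL_append, SemL_append]
  have h1 : SemL g f r.output ≤ SemL g f [Symbol.nonterminal r.input] := by
    rw [SemL_singleton]
    exact rule_sound r hr
  exact (key p r.output q).trans_le
    ((mul_le_mul' (mul_le_mul' le_rfl h1) le_rfl).trans_eq (key p [Symbol.nonterminal r.input] q).symm)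

lemma semL_derives {u v : List (Symbol Δ (NT2 α g.NT))} (h : (G2 g f).Derives u v) :
    SemL g f v ≤ SemL g f u := by
  induction h with
  | refl => exact le_rfl
  | tail _ hp ih => exact le_trans (semL_step hp) ih

lemma soundness {w : List Δ} (hw : w ∈ (G2 g f).language) : appH f w ∈ g.language := by
  rw [mem_language_iff] at hw
  have h1 : w ∈ SemL g f [Symbol.nonterminal (G2 g f).initial] :=
    semL_derives hw self_mem_SemL
  rw [SemL_singleton] at h1
  exact h1

end Soundness
section Completeness

variable {α Δ : Type} [Fintype α] [Fintype Δ] {g : ContextFreeGrammar α} {f : Δ → List α}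

open ContextFreeGrammar

lemma mem_rules2_cases :
    ∀ {r' : ContextFreeRule Δ (NT2 α g.NT)},
    ((r' = ⟨Sum.inr true, [Esym α Δ g.NT, tr Δ [] (Symbol.nonterminal g.initial) []]⟩ ∨
      r' = ⟨Sum.inr false, []⟩) ∨
     (∃ δ, f δ = [] ∧ r' = ⟨Sum.inr false, [Symbol.terminal δ, Esym α Δ g.NT]⟩)) →
    r' ∈ rules2 g f := by
  classical
  intro r' h
  simp only [rules2, Finset.mem_union, Finset.mem_insert, Finset.mem_singleton,
    Finset.mem_image, Finset.mem_filter, Finset.mem_univ, true_and]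
  rcases h with (h | h) | ⟨δ, h1, h2⟩
  · exact Or.inl (Or.inl (Or.inl (Or.inl h)))
  · exact Or.inl (Or.inl (Or.inl (Or.inr h)))
  · exact Or.inl (Or.inl (Or.inr ⟨δ, h1, h2.symm⟩))

lemma start_rule_mem :
    (⟨Sum.inr true, [Esym α Δ g.NT, tr Δ [] (Symbol.nonterminal g.initial) []]⟩ :
      ContextFreeRule Δ (NT2 α g.NT)) ∈ rules2 g f :=
  mem_rules2_cases (Or.inl (Or.inl rfl))

lemma Enil_rule_mem :
    (⟨Sum.inr false, []⟩ : ContextFreeRule Δ (NT2 α g.NT)) ∈ rules2 g f :=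
  mem_rules2_cases (Or.inl (Or.inr rfl))

lemma Econs_rule_mem (δ : Δ) (hδ : f δ = []) :
    (⟨Sum.inr false, [Symbol.terminal δ, Esym α Δ g.NT]⟩ :
      ContextFreeRule Δ (NT2 α g.NT)) ∈ rules2 g f :=
  mem_rules2_cases (Or.inr ⟨δ, hδ, rfl⟩)

lemma main_rule_mem (r : ContextFreeRule α g.NT) (hr : r ∈ g.rules) (c : List (List α))
    (hc1 : c.length = r.output.length + 1) (hc2 : ∀ b ∈ c, b ∈ Prefs f) :
    (⟨Sum.inl (c.headD [], Symbol.nonterminal r.input, c.getLastD []), mkOut Δ r.output c⟩ :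
      ContextFreeRule Δ (NT2 α g.NT)) ∈ rules2 g f := by
  classical
  simp only [rules2, Finset.mem_union]
  exact Or.inl (Or.inr (Finset.mem_biUnion.mpr ⟨r, hr,
    Finset.mem_image.mpr ⟨c, mem_chainsF.mpr ⟨hc1, hc2⟩, rfl⟩⟩))

lemma len_le_appH {ds : List Δ} (hds : ∀ δ ∈ ds, f δ ≠ []) :
    ds.length ≤ (appH f ds).length := by
  induction ds with
  | nil => simp
  | cons δ ds' ih =>
    have h1 : 1 ≤ (f δ).length := by
      have := hds δ (by simp)
      cases hf : f δ with
      | nil => exact absurd hf this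
      | cons _ _ => simp
    have h2 := ih (fun δ' h => hds δ' (by simp [h]))
    simp only [appH_cons, List.length_cons, List.length_append]
    omega

lemma term_rule_mem (x y : List α) (a : α) (ds : List Δ) (hx : x ∈ Prefs f) (hy : y ∈ Prefs f)
    (hds : ∀ δ ∈ ds, f δ ≠ []) (heq : x ++ [a] = appH f ds ++ y) :
    (⟨Sum.inl (x, Symbol.terminal a, y),
        ds.flatMap fun δ => [Symbol.terminal δ, Esym α Δ g.NT]⟩ :
      ContextFreeRule Δ (NT2 α g.NT)) ∈ rules2 g f := by
  classical
  have hlen : ds.length ≤ x.length + 1 := by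
    have h1 := len_le_appH hds
    have h2 := congrArg List.length heq
    simp at h2
    omega
  simp only [rules2, Finset.mem_union]
  refine Or.inr (Finset.mem_biUnion.mpr ⟨(x, (a, y)), ?_, Finset.mem_image.mpr
    ⟨ds, Finset.mem_filter.mpr ⟨mem_listsLe hlen, hds, heq⟩, rfl⟩⟩)
  simp [Finset.mem_product, hx, hy]

lemma E_derives (e : List Δ) (he : ∀ δ ∈ e, f δ = []) :
    (G2 g f).Derives [Esym α Δ g.NT] (e.map Symbol.terminal) := by
  induction e with
  | nil =>
    exact Produces.single
      ⟨⟨Sum.inr false, []⟩, Enil_rule_mem, ContextFreeRule.Rewrites.input_output⟩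
  | cons δ e' ih =>
    have h1 : (G2 g f).Produces [Esym α Δ g.NT] [Symbol.terminal δ, Esym α Δ g.NT] :=
      ⟨⟨Sum.inr false, [Symbol.terminal δ, Esym α Δ g.NT]⟩, Econs_rule_mem δ (he δ (by simp)),
        ContextFreeRule.Rewrites.input_output⟩
    have h2 := (ih (fun δ' h => he δ' (by simp [h]))).append_left [Symbol.terminal δ]
    exact h1.trans_derives h2

lemma head?_dropWhile {p : Δ → Bool} :
    ∀ (l : List Δ) (δ : Δ), ((l.dropWhile p).head? = some δ) → p δ = false := by
  intro l
  induction l with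
  | nil => simp
  | cons a l ih =>
    intro δ h
    rw [List.dropWhile_cons] at h
    split at h
    · exact ih δ h
    · simp only [List.head?_cons, Option.some.injEq] at h
      subst h
      rename_i hpa
      simpa using hpa

lemma chunk_derives : ∀ (n : ℕ) (w : List Δ), w.length ≤ n →
    (∀ δ, w.head? = some δ → f δ ≠ []) →
    ∃ ds : List Δ, (∀ δ ∈ ds, f δ ≠ []) ∧ appH f ds = appH f w ∧
      (G2 g f).Derives (ds.flatMap fun δ => [Symbol.terminal δ, Esym α Δ g.NT])
        (w.map Symbol.terminal) := by
  intro n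
  induction n with
  | zero =>
    intro w hw _
    have hw0 : w = [] := by cases w <;> simp_all
    subst hw0
    exact ⟨[], by simp, by simp, Derives.refl _⟩
  | succ m ih =>
    intro w hw hhead
    cases w with
    | nil => exact ⟨[], by simp, by simp, Derives.refl _⟩
    | cons δ w₁ =>
      classical
      have hδ : f δ ≠ [] := hhead δ rfl
      set p : Δ → Bool := fun δ' => decide (f δ' = []) with hp
      have hsplit : w₁.takeWhile p ++ w₁.dropWhile p = w₁ :=
        List.takeWhile_append_dropWhile
      set e := w₁.takeWhile p with he'
      set w₂ := w₁.dropWhile p with hw₂'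
      have hlen : w₂.length ≤ m := by
        have := congrArg List.length hsplit
        simp only [List.length_append] at this
        simp only [List.length_cons] at hw
        omega
      have hhead₂ : ∀ δ', w₂.head? = some δ' → f δ' ≠ [] := by
        intro δ' h
        have := head?_dropWhile w₁ δ' h
        simpa [p] using this
      obtain ⟨ds₂, h1, h2, h3⟩ := ih w₂ hlen hhead₂
      have he : ∀ δ' ∈ e, f δ' = [] := by
        intro δ' h
        have := List.mem_takeWhile_imp h
        simpa [p] using this
      have happHe : appH f e = [] := List.flatMap_eq_nil_iff.mpr he
      refine ⟨δ :: ds₂, ?_, ?_, ?_⟩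
      · intro δ' h
        rcases List.mem_cons.mp h with rfl | h
        · exact hδ
        · exact h1 δ' h
      · rw [appH_cons, appH_cons, h2, ← hsplit, appH_append, happHe]
        simp
      · have d_e := (E_derives e he).append_right
          (ds₂.flatMap fun δ' => [Symbol.terminal δ', Esym α Δ g.NT])
        have d_2 := h3.append_left (e.map Symbol.terminal)
        have d := (d_e.trans d_2).append_left [Symbol.terminal δ]
        have hgoal : (δ :: w₁).map (Symbol.terminal : Δ → Symbol Δ (NT2 α g.NT))
            = [Symbol.terminal δ] ++ (e.map Symbol.terminal ++ w₂.map Symbol.terminal) := by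
          rw [← List.map_append, hsplit]
          rfl
        exact (congrArg (fun t => (G2 g f).Derives
          (List.flatMap (fun δ => [Symbol.terminal δ, Esym α Δ g.NT]) (δ :: ds₂)) t) hgoal).mpr d

lemma term_triple_derives (x y : List α) (a : α) (w : List Δ)
    (heq : x ++ [a] = appH f w ++ y)
    (hhead : ∀ δ, w.head? = some δ → x.length < (f δ).length)
    (hx : x ∈ Prefs f) (hy : y ∈ Prefs f) :
    (G2 g f).Derives [tr Δ x (Symbol.terminal a) y] (w.map Symbol.terminal) := by
  have hh : ∀ δ, w.head? = some δ → f δ ≠ [] := by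
    intro δ h hc
    have := hhead δ h
    rw [hc] at this
    simp at this
  obtain ⟨ds, h1, h2, h3⟩ := chunk_derives w.length w le_rfl hh
  have hmem := term_rule_mem (g := g) x y a ds hx hy h1 (by rw [heq, ← h2])
  have hprod : (G2 g f).Produces [tr Δ x (Symbol.terminal a) y]
      (ds.flatMap fun δ => [Symbol.terminal δ, Esym α Δ g.NT]) :=
    ⟨_, hmem, ContextFreeRule.Rewrites.input_output⟩
  exact hprod.trans_derives h3

lemma cut_lemma : ∀ (w : List Δ) (m : ℕ) (y : List α), m ≤ (appH f w ++ y).length →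
    y ∈ Prefs f →
    ∃ (w₁ w₂ : List Δ) (r : List α), w = w₁ ++ w₂ ∧ (appH f w₁).length ≤ m ∧
      appH f w₁ ++ r = (appH f w ++ y).take m ∧
      r ++ (appH f w ++ y).drop m = appH f w₂ ++ y ∧
      (∀ δ, w₂.head? = some δ → r.length < (f δ).length) ∧ r ∈ Prefs f := by
  intro w
  induction w with
  | nil =>
    intro m y hm hy
    refine ⟨[], [], y.take m, rfl, by simp, rfl, ?_, by simp, take_mem_Prefs hy m⟩
    · simpa using List.take_append_drop m y
  | cons δ w' ih =>
    intro m y hm hy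
    rcases lt_or_ge m (f δ).length with hlt | hle
    · refine ⟨[], δ :: w', (f δ).take m, rfl, by simp, ?_, ?_, ?_, take_block_mem_Prefs f δ m⟩
      · have : appH f (δ :: w') ++ y = f δ ++ (appH f w' ++ y) := by simp
        rw [this, List.take_append_of_le_length (le_of_lt hlt)]
        simp
      · have : appH f (δ :: w') ++ y = f δ ++ (appH f w' ++ y) := by simp
        rw [this, List.drop_append_of_le_length (le_of_lt hlt)]
        rw [← List.append_assoc, List.take_append_drop]
      · intro δ' h
        simp only [List.head?_cons, Option.some.injEq] at h
        subst h
        simpa [Nat.min_eq_left (le_of_lt hlt)] using hlt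
    · obtain ⟨w₁', w₂, r, hsplit, hlen, htake, hdrop, hhead, hrP⟩ :=
        ih (m - (f δ).length) y (by simp at hm ⊢; omega) hy
      have hm' : m = (f δ).length + (m - (f δ).length) := by omega
      refine ⟨δ :: w₁', w₂, r, by rw [List.cons_append, hsplit], ?_, ?_, ?_, hhead, hrP⟩
      · simp only [appH_cons, List.length_append]
        omega
      · have h1 : appH f (δ :: w') ++ y = f δ ++ (appH f w' ++ y) := by simp
        rw [h1, hm', List.take_length_add_append]
        simp only [appH_cons, List.append_assoc]
        rw [htake]
      · have h1 : appH f (δ :: w') ++ y = f δ ++ (appH f w' ++ y) := by simp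
        rw [h1, hm', List.drop_length_add_append]
        exact hdrop

end Completeness

section Main

variable {α Δ : Type} [Fintype α] [Fintype Δ] {g : ContextFreeGrammar α} {f : Δ → List α}

open ContextFreeGrammar

lemma complete_W (n : ℕ) :
    ∀ (s : List (Symbol α g.NT)) (z : List α), DerivesIn g s (z.map Symbol.terminal) n →
    ∀ (x y : List α) (w : List Δ), x ++ z = appH f w ++ y →
    (∀ δ, w.head? = some δ → x.length < (f δ).length) → x ∈ Prefs f → y ∈ Prefs f →
    ∃ c : List (List α), c.length = s.length + 1 ∧ (∀ b ∈ c, b ∈ Prefs f) ∧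
      c.headD [] = x ∧ c.getLastD [] = y ∧
      (G2 g f).Derives (mkOut Δ s c) (w.map Symbol.terminal) := by
  induction n using Nat.strong_induction_on with
  | _ n IH =>
  intro s
  induction s with
  | nil =>
    intro z hder x y w heq hhead hx hy
    have hder' : DerivesIn g (([] : List α).map Symbol.terminal) (z.map Symbol.terminal) n := hder
    obtain ⟨hz, -⟩ := hder'.terminal_src
    have hz' : z = [] := by simpa using hz
    subst hz'
    have hw : w = [] := by
      cases w with
      | nil => rfl
      | cons δ w'' =>
        exfalso
        have h1 := hhead δ rfl
        have h2 := congrArg List.length heq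
        simp at h2
        omega
    subst hw
    have hxy : x = y := by simpa using heq
    exact ⟨[x], by simp, by simpa using hx, rfl, by simpa using hxy, Derives.refl _⟩
  | cons X s' ihs =>
    intro z hder x y w heq hhead hx hy
    have hder' : DerivesIn g ([X] ++ s') (z.map Symbol.terminal) n := hder
    obtain ⟨z₁, z₂, n₁, n₂, rfl, hn, d1, d2⟩ := hder'.append_split
    have hm : (x ++ z₁).length ≤ (appH f w ++ y).length := by
      have := congrArg List.length heq
      simp at this ⊢
      omega
    obtain ⟨w₁, w₂, r, rfl, hlen1, htake, hdrop, hhead₂, hrP⟩ :=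
      cut_lemma w (x ++ z₁).length y hm hy
    have hamb : appH f (w₁ ++ w₂) ++ y = (x ++ z₁) ++ z₂ := by
      rw [← heq]
      simp [List.append_assoc]
    have htake' : x ++ z₁ = appH f w₁ ++ r := by
      rw [htake, hamb, List.take_left]
    have hdrop' : r ++ z₂ = appH f w₂ ++ y := by
      rw [hamb, List.drop_left] at hdrop
      exact hdrop
    have hhead1 : ∀ δ, w₁.head? = some δ → x.length < (f δ).length := by
      intro δ h
      refine hhead δ ?_
      rw [List.head?_append, h]
      rfl
    have assemble : ∀ (c' : List (List α)), c'.length = s'.length + 1 →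
        (∀ b ∈ c', b ∈ Prefs f) → c'.headD [] = r → c'.getLastD [] = y →
        (G2 g f).Derives (mkOut Δ s' c') (w₂.map Symbol.terminal) →
        (G2 g f).Derives [tr Δ x X r] (w₁.map Symbol.terminal) →
        ∃ c : List (List α), c.length = (X :: s').length + 1 ∧ (∀ b ∈ c, b ∈ Prefs f) ∧
          c.headD [] = x ∧ c.getLastD [] = y ∧
          (G2 g f).Derives (mkOut Δ (X :: s') c) (((w₁ ++ w₂)).map Symbol.terminal) := by
      intro c' hclen hcmem hchead hclast hcder hder₁
      obtain ⟨b, c'', rfl⟩ : ∃ b c'', c' = b :: c'' := by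
        cases c' with
        | nil => simp at hclen
        | cons b c'' => exact ⟨b, c'', rfl⟩
      have hb : b = r := by simpa using hchead
      subst hb
      refine ⟨x :: b :: c'', ?_, ?_, rfl, ?_, ?_⟩
      · simp only [List.length_cons] at hclen ⊢
        omega
      · intro b' hb'
        rcases List.mem_cons.mp hb' with rfl | hb'
        · exact hx
        · exact hcmem b' hb'
      · rw [List.getLastD_cons]
        exact (getLastD_ne_nil (by simp) x []).trans hclast
      · have d := (hder₁.append_right (mkOut Δ s' (b :: c''))).trans
          (hcder.append_left (w₁.map Symbol.terminal))
        rw [List.map_append]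
        exact d
    cases X with
    | terminal a =>
      have hz₁ : z₁ = [a] := d1.terminal_head
      have hn₁ : n₁ = 0 := by
        have hd1' : DerivesIn g (([a] : List α).map Symbol.terminal) (z₁.map Symbol.terminal) n₁ := d1
        exact hd1'.terminal_src.2
      have hder₁ : (G2 g f).Derives [tr Δ x (Symbol.terminal a) r] (w₁.map Symbol.terminal) :=
        term_triple_derives x r a w₁ (by rw [← hz₁]; exact htake') hhead1 hx hrP
      have hd2' : DerivesIn g s' (z₂.map Symbol.terminal) n := by
        have hnn : n₂ = n := by omega
        exact hnn ▸ d2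
      obtain ⟨c', h1, h2, h3, h4, h5⟩ := ihs z₂ hd2' r y w₂ hdrop' hhead₂ hrP hy
      exact assemble c' h1 h2 h3 h4 h5 hder₁
    | nonterminal A =>
      obtain ⟨ru, hru, hruA, m, hm1, dru⟩ := d1.nt_head
      obtain ⟨c₀, hc₀len, hc₀mem, hc₀head, hc₀last, dmk⟩ :=
        IH m (by omega) ru.output z₁ dru x r w₁ htake' hhead1 hx hrP
      have hrule := main_rule_mem (f := f) ru hru c₀ hc₀len hc₀mem
      have hprod : (G2 g f).Produces
          [Symbol.nonterminal (Sum.inl (c₀.headD [], Symbol.nonterminal ru.input, c₀.getLastD []))]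
          (mkOut Δ ru.output c₀) := ⟨_, hrule, ContextFreeRule.Rewrites.input_output⟩
      rw [hc₀head, hc₀last, hruA] at hprod
      have hder₁ : (G2 g f).Derives [tr Δ x (Symbol.nonterminal A) r] (w₁.map Symbol.terminal) :=
        hprod.trans_derives dmk
      obtain ⟨c', h1, h2, h3, h4, h5⟩ :=
        IH n₂ (by omega) s' z₂ d2 r y w₂ hdrop' hhead₂ hrP hy
      exact assemble c' h1 h2 h3 h4 h5 hder₁

lemma completeness {w : List Δ} (hw : appH f w ∈ g.language) : w ∈ (G2 g f).language := by
  classical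
  rw [mem_language_iff] at hw ⊢
  obtain ⟨n, hder⟩ := derives_iff_derivesIn.mp hw
  set p : Δ → Bool := fun δ' => decide (f δ' = []) with hp
  have hsplit : w.takeWhile p ++ w.dropWhile p = w := List.takeWhile_append_dropWhile
  set e := w.takeWhile p with he'
  set w' := w.dropWhile p with hw''
  have he : ∀ δ ∈ e, f δ = [] := by
    intro δ h
    have := List.mem_takeWhile_imp h
    simpa [p] using this
  have happHe : appH f e = [] := List.flatMap_eq_nil_iff.mpr he
  have heq : ([] : List α) ++ appH f w = appH f w' ++ ([] : List α) := by
    rw [← hsplit]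
    simp [happHe]
  have hhead : ∀ δ, w'.head? = some δ → ([] : List α).length < (f δ).length := by
    intro δ h
    have := head?_dropWhile w δ h
    have hne : f δ ≠ [] := by simpa [p] using this
    cases hfδ : f δ with
    | nil => exact absurd hfδ hne
    | cons _ _ => simp
  obtain ⟨c, hclen, hcmem, hchead, hclast, hcder⟩ :=
    complete_W n [Symbol.nonterminal g.initial] (appH f w) hder [] [] w' heq hhead
      (nil_mem_Prefs f) (nil_mem_Prefs f)
  obtain ⟨b₁, b₂, rfl⟩ : ∃ b₁ b₂, c = [b₁, b₂] := by
    cases c with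
    | nil => simp at hclen
    | cons b₁ c0 =>
      cases c0 with
      | nil => simp at hclen
      | cons b₂ c1 =>
        cases c1 with
        | nil => exact ⟨b₁, b₂, rfl⟩
        | cons _ _ => simp at hclen
  have hb₁ : b₁ = [] := by simpa using hchead
  have hb₂ : b₂ = [] := by simpa using hclast
  subst hb₁; subst hb₂
  have hstart : (G2 g f).Produces [Symbol.nonterminal (G2 g f).initial]
      [Esym α Δ g.NT, tr Δ [] (Symbol.nonterminal g.initial) []] :=
    ⟨_, start_rule_mem, ContextFreeRule.Rewrites.input_output⟩
  have hder2 : (G2 g f).Derives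
      ([Esym α Δ g.NT] ++ [tr Δ [] (Symbol.nonterminal g.initial) []])
      (e.map Symbol.terminal ++ w'.map Symbol.terminal) :=
    ((E_derives e he).append_right _).trans ((hcder).append_left (e.map Symbol.terminal))
  have : (G2 g f).Derives [Symbol.nonterminal (G2 g f).initial] (w.map Symbol.terminal) := by
    refine hstart.trans_derives ?_
    rw [← List.map_append, hsplit] at hder2
    exact hder2
  exact this

lemma G2_language : (G2 g f).language = {w | appH f w ∈ g.language} :=
  Set.ext fun _ => ⟨soundness, completeness⟩

end Main

end WPCF

/-- Theorem 6.4 (for context-free languages): the class of groups with context-free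
word problem is closed under finitely generated subgroups. -/
theorem wordProblem_contextFree_of_fg_subgroup
    {α Δ : Type} [Fintype α] [Fintype Δ] {G : Type} [Group G] (H : Subgroup G)
    (hfg : H.FG)
    (σ : FreeMonoid α →* G) (hσ : Function.Surjective σ)
    (μ : FreeMonoid Δ →* H) (hμ : Function.Surjective μ)
    (h : Language.IsContextFree {w : List α | σ (FreeMonoid.ofList w) = 1}) :
    Language.IsContextFree {w : List Δ | μ (FreeMonoid.ofList w) = 1} := by
  classical
  obtain ⟨g, hg⟩ := h
  choose u hu using hσ
  set f : Δ → List α := fun δ => FreeMonoid.toList (u ((μ (FreeMonoid.ofList [δ]) : H) : G))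
    with hf
  have hfσ : ∀ δ : Δ, σ (FreeMonoid.ofList (f δ)) = ((μ (FreeMonoid.ofList [δ]) : H) : G) := by
    intro δ
    have : FreeMonoid.ofList (f δ) = u ((μ (FreeMonoid.ofList [δ]) : H) : G) := by
      simp [hf]
    rw [this]
    exact hu _
  have key : ∀ w : List Δ,
      σ (FreeMonoid.ofList (WPCF.appH f w)) = ((μ (FreeMonoid.ofList w) : H) : G) := by
    intro w
    induction w with
    | nil =>
      have h1 : FreeMonoid.ofList (WPCF.appH f ([] : List Δ)) = (1 : FreeMonoid α) := rfl
      have h2 : FreeMonoid.ofList ([] : List Δ) = (1 : FreeMonoid Δ) := rfl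
      rw [h1, h2, map_one, map_one]
      simp
    | cons δ w ih =>
      have h1 : FreeMonoid.ofList (WPCF.appH f (δ :: w))
          = FreeMonoid.ofList (f δ) * FreeMonoid.ofList (WPCF.appH f w) := rfl
      have h2 : FreeMonoid.ofList (δ :: w) = FreeMonoid.ofList [δ] * FreeMonoid.ofList w := rfl
      rw [h1, h2, map_mul, map_mul, hfσ, ih]
      exact (Subgroup.coe_mul H _ _).symm
  refine ⟨WPCF.G2 g f, ?_⟩
  rw [WPCF.G2_language]
  ext w
  show WPCF.appH f w ∈ g.language ↔ w ∈ {w : List Δ | μ (FreeMonoid.ofList w) = 1}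
  rw [hg]
  simp only [Set.mem_setOf_eq]
  constructor
  · intro hw
    have hk := key w
    rw [hw] at hk
    exact (OneMemClass.coe_eq_one.mp hk.symm)
  · intro hw
    show σ (FreeMonoid.ofList (WPCF.appH f w)) = 1
    rw [key w, hw]
    exact OneMemClass.coe_one _
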